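/- arXiv:2307.02402 — 4 statements merged into one kernel-verified Lean document; each statement's English description precedes it below -/
import Mathlib

section
/- The Hungarian algorithm (bipartite matching) is a particular case of optimal transport: if one adds a dummy background ground truth with mass (N_p - N_g)/N_p and constant matching cost c_∅, then the optimal transport plan between the uniform distribution α on N_p predictions and the distribution β on N_g+1 ground truths takes values in {0, 1/N_p}, and the set σ(j) = {i : P_{i,j} = 1/N_p} for j ≤ N_g defines an injective assignment of ground truths to predictions that minimizes the total bipartite matching cost. -/
open Finset

lemma birkhoff_lb {n : Type*} [Fintype n] [DecidableEq n] (M D : Matrix n n ℝ)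
    (hM : M ∈ doublyStochastic ℝ n) (L : ℝ)
    (h : ∀ π : Equiv.Perm n, L ≤ ∑ a, D a (π a)) :
    L ≤ ∑ a, ∑ b, M a b * D a b := by
  obtain ⟨w, hw0, hw1, hMw⟩ := exists_eq_sum_perm_of_mem_doublyStochastic hM
  have hsum : ∑ a, ∑ b, M a b * D a b = ∑ π : Equiv.Perm n, w π * ∑ a, D a (π a) := by
    rw [← hMw]
    simp only [Matrix.sum_apply, Matrix.smul_apply, smul_eq_mul, Finset.sum_mul, Finset.mul_sum]
    conv_lhs => enter [2, a]; rw [Finset.sum_comm]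
    rw [Finset.sum_comm]
    refine Finset.sum_congr rfl fun π _ => ?_
    refine Finset.sum_congr rfl fun a _ => ?_
    simp only [Equiv.Perm.permMatrix, PEquiv.toMatrix_apply, Equiv.toPEquiv_apply,
      Option.mem_def, Option.some.injEq, ite_mul, one_mul, zero_mul, mul_ite, mul_zero, mul_one]
    simp [eq_comm]
  rw [hsum]
  calc L = ∑ π : Equiv.Perm n, w π * L := by rw [← Finset.sum_mul, hw1, one_mul]
    _ ≤ _ := Finset.sum_le_sum fun π _ => mul_le_mul_of_nonneg_left (h π) (hw0 π)

/-- The Hungarian algorithm (bipartite matching) as a particular case of optimal transport: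
there is an optimal transport plan for the augmented problem (with a background column of
constant cost `c∅` and marginals `α = 1/Np` uniform, `β j = 1/Np` for `j ≤ Ng`,
`β (Ng+1) = (Np - Ng)/Np`) taking values in `{0, 1/Np}`, whose nonzero entries in the first
`Ng` columns define an injective assignment `σ` of ground truths to predictions minimizing
the total bipartite matching cost. -/
theorem hungarian_is_particular_case_of_OT
    (Np Ng : ℕ) (hNp : 0 < Np) (hNg : Ng ≤ Np)
    (C : Fin Np → Fin (Ng + 1) → ℝ) (c0 : ℝ)
    (hbg : ∀ i, C i (Fin.last Ng) = c0)
    (β : Fin (Ng + 1) → ℝ)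
    (hβ : ∀ j : Fin Ng, β j.castSucc = 1 / Np)
    (hβbg : β (Fin.last Ng) = (Np - Ng : ℝ) / Np)
    (U : Set (Fin Np → Fin (Ng + 1) → ℝ))
    (hU : U = {P : Fin Np → Fin (Ng + 1) → ℝ | (∀ i j, 0 ≤ P i j) ∧ (∀ i, ∑ j, P i j = 1 / Np) ∧
      (∀ j, ∑ i, P i j = β j)}) :
    ∃ P ∈ U,
      (∀ Q ∈ U, ∑ i, ∑ j, P i j * C i j ≤ ∑ i, ∑ j, Q i j * C i j) ∧
      (∀ i j, P i j = 0 ∨ P i j = 1 / Np) ∧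
      ∃ σ : Fin Ng → Fin Np, Function.Injective σ ∧
        (∀ j : Fin Ng, ∀ i, P i j.castSucc = 1 / Np ↔ i = σ j) ∧
        (∀ τ : Fin Ng → Fin Np, Function.Injective τ →
          ∑ j : Fin Ng, C (σ j) j.castSucc ≤ ∑ j : Fin Ng, C (τ j) j.castSucc) := by
  classical
  subst hU
  have hnp : (0:ℝ) < (Np:ℝ) := by exact_mod_cast hNp
  have hnpne : (1:ℝ)/Np ≠ 0 := by positivity
  have hdcast : ((Np - Ng : ℕ):ℝ) = (Np:ℝ) - Ng := by
    rw [Nat.cast_sub hNg]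
  -- Step A: optimal injection σ
  obtain ⟨σ, hσmem, hσmin⟩ := Finset.exists_min_image
      (Finset.univ.filter (fun f : Fin Ng → Fin Np => Function.Injective f))
      (fun f => ∑ j : Fin Ng, C (f j) j.castSucc)
      ⟨Fin.castLE hNg, Finset.mem_filter.2 ⟨Finset.mem_univ _, Fin.castLE_injective hNg⟩⟩
  have hσinj : Function.Injective σ := (Finset.mem_filter.1 hσmem).2
  have hσopt : ∀ τ : Fin Ng → Fin Np, Function.Injective τ →
      ∑ j : Fin Ng, C (σ j) j.castSucc ≤ ∑ j : Fin Ng, C (τ j) j.castSucc := fun τ hτ =>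
    hσmin τ (Finset.mem_filter.2 ⟨Finset.mem_univ _, hτ⟩)
  set m : ℝ := ∑ j : Fin Ng, C (σ j) j.castSucc with hm
  -- define the plan P
  set P : Fin Np → Fin (Ng+1) → ℝ := fun i j =>
    if h : (j:ℕ) < Ng then (if σ ⟨j.1, h⟩ = i then 1/Np else 0)
    else (if i ∈ Finset.univ.image σ then 0 else 1/Np) with hPdef
  have hPc : ∀ (j : Fin Ng) (i), P i j.castSucc = if σ j = i then 1/(Np:ℝ) else 0 := by
    intro j i
    simp only [hPdef, Fin.coe_castSucc, j.isLt, dif_pos, Fin.eta]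
  have hPl : ∀ i, P i (Fin.last Ng) = if i ∈ Finset.univ.image σ then 0 else 1/(Np:ℝ) := by
    intro i
    simp [hPdef]
  -- indicator sum lemma
  have hind : ∀ (i : Fin Np) (a : ℝ), ∑ j : Fin Ng, (if σ j = i then a else 0)
      = if i ∈ Finset.univ.image σ then a else 0 := by
    intro i a
    rw [← Finset.sum_image (f := fun k => if k = i then a else 0)
      (fun x _ y _ h => hσinj h)]
    simp [Finset.sum_ite_eq']
  have himgcard : (Finset.univ.image σ).card = Ng := by
    rw [Finset.card_image_of_injective _ hσinj, Finset.card_univ, Fintype.card_fin]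
  have hcompcard : (Finset.univ \ Finset.univ.image σ).card = Np - Ng := by
    rw [Finset.card_sdiff_of_subset (Finset.subset_univ _), Finset.card_univ, Fintype.card_fin, himgcard]
  -- P ∈ U
  have hP0 : ∀ i j, 0 ≤ P i j := by
    intro i j
    simp only [hPdef]
    split <;> split <;> positivity
  have hProw : ∀ i, ∑ j, P i j = 1/(Np:ℝ) := by
    intro i
    rw [Fin.sum_univ_castSucc]
    simp only [hPc, hPl, hind]
    by_cases h : i ∈ Finset.univ.image σ <;> simp [h]
  have hPcolc : ∀ j : Fin Ng, ∑ i, P i j.castSucc = 1/(Np:ℝ) := by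
    intro j
    simp only [hPc]
    simp [Finset.sum_ite_eq]
  have hPcoll : ∑ i, P i (Fin.last Ng) = ((Np:ℝ) - Ng)/Np := by
    simp only [hPl]
    rw [Finset.sum_ite, Finset.sum_const, Finset.sum_const, Finset.filter_not,
      Finset.filter_mem_eq_inter, Finset.univ_inter]
    rw [hcompcard, smul_zero, zero_add, nsmul_eq_mul, hdcast]
    ring
  have hPcol : ∀ j, ∑ i, P i j = β j := by
    intro j
    induction j using Fin.lastCases with
    | last => rw [hPcoll, hβbg]
    | cast j => rw [hPcolc, hβ]
  have hPU : P ∈ {P : Fin Np → Fin (Ng + 1) → ℝ | (∀ i j, 0 ≤ P i j) ∧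
      (∀ i, ∑ j, P i j = 1 / Np) ∧ (∀ j, ∑ i, P i j = β j)} := ⟨hP0, hProw, hPcol⟩
  -- cost of P
  have hcostP : ∑ i, ∑ j, P i j * C i j = (1/Np) * (m + ((Np:ℝ) - Ng) * c0) := by
    conv_lhs => enter [2, i]; rw [Fin.sum_univ_castSucc]
    rw [Finset.sum_add_distrib]
    have h1 : ∑ i, ∑ j : Fin Ng, P i j.castSucc * C i j.castSucc = (1/Np) * m := by
      rw [Finset.sum_comm, hm, Finset.mul_sum]
      refine Finset.sum_congr rfl fun j _ => ?_
      simp only [hPc, ite_mul, zero_mul]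
      rw [Finset.sum_ite_eq]
      simp
    have h2 : ∑ i, P i (Fin.last Ng) * C i (Fin.last Ng) = ((Np:ℝ) - Ng)/Np * c0 := by
      have : ∀ i, P i (Fin.last Ng) * C i (Fin.last Ng) = P i (Fin.last Ng) * c0 := by
        intro i; rw [hbg]
      rw [Finset.sum_congr rfl fun i _ => this i, ← Finset.sum_mul, hPcoll]
    rw [h1, h2]
    ring
  -- optimality
  refine ⟨P, hPU, ?_, ?_, σ, hσinj, ?_, hσopt⟩
  · -- OT optimality
    rintro Q ⟨hQ0, hQr, hQc⟩
    have hQlast : ∑ i, Q i (Fin.last Ng) = ((Np:ℝ) - Ng)/Np := by rw [hQc, hβbg]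
    -- each entry of last column is 0 when Np = Ng
    have hkey : ∀ i : Fin Np, ((Np - Ng : ℕ):ℝ) * ((Np:ℝ) * Q i (Fin.last Ng) / ((Np:ℝ) - Ng))
        = (Np:ℝ) * Q i (Fin.last Ng) := by
      intro i
      rcases eq_or_lt_of_le hNg with h | h
      · have hz : ∀ i : Fin Np, Q i (Fin.last Ng) = 0 := by
          have hs0 : ∑ i, Q i (Fin.last Ng) = 0 := by
            rw [hQlast, h]; simp
          intro i'
          exact (Finset.sum_eq_zero_iff_of_nonneg (fun i'' _ => hQ0 i'' _)).1 hs0 i'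
            (Finset.mem_univ _)
        rw [hz i]; simp
      · have hne : (Np:ℝ) - Ng ≠ 0 := by
          have : (Ng:ℝ) < Np := by exact_mod_cast h
          linarith
        rw [hdcast, mul_div_cancel₀]
        exact hne
    set n := (Fin Ng ⊕ Fin (Np - Ng)) with hn
    set e : n ≃ Fin Np := finSumFinEquiv.trans (finCongr (Nat.add_sub_cancel' hNg)) with he
    set M : Matrix n n ℝ := fun a b =>
      Sum.elim (fun j : Fin Ng => (Np:ℝ) * Q (e a) j.castSucc)
        (fun _ => (Np:ℝ) * Q (e a) (Fin.last Ng) / ((Np:ℝ) - Ng)) b with hM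
    set D : Matrix n n ℝ := fun a b =>
      C (e a) (Sum.elim Fin.castSucc (fun _ => Fin.last Ng) b) with hD
    have hMds : M ∈ doublyStochastic ℝ n := by
      rw [mem_doublyStochastic_iff_sum]
      refine ⟨?_, ?_, ?_⟩
      · rintro a (j | t)
        · simp only [hM, Sum.elim_inl]
          exact mul_nonneg (by positivity) (hQ0 _ _)
        · simp only [hM, Sum.elim_inr]
          have hge : (0:ℝ) ≤ (Np:ℝ) - Ng := by
            have : (Ng:ℝ) ≤ Np := by exact_mod_cast hNg
            linarith
          exact div_nonneg (mul_nonneg (by positivity) (hQ0 _ _)) hge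
      · intro a
        rw [Fintype.sum_sum_type]
        simp only [hM, Sum.elim_inl, Sum.elim_inr]
        rw [Finset.sum_const, Finset.card_univ, Fintype.card_fin, nsmul_eq_mul, hkey]
        rw [← Finset.mul_sum, ← mul_add, ← Fin.sum_univ_castSucc, hQr]
        field_simp
      · rintro (j | t)
        · simp only [hM, Sum.elim_inl]
          rw [Equiv.sum_comp e (fun i => (Np:ℝ) * Q i j.castSucc), ← Finset.mul_sum,
            hQc, hβ]
          field_simp
        · simp only [hM, Sum.elim_inr]
          have hlt : Ng < Np := by
            by_contra hcon
            have : Np - Ng = 0 := by omega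
            exact absurd (this ▸ t).isLt (by simp [this])
          have hne : (Np:ℝ) - Ng ≠ 0 := by
            have : (Ng:ℝ) < Np := by exact_mod_cast hlt
            linarith
          rw [Equiv.sum_comp e (fun i => (Np:ℝ) * Q i (Fin.last Ng) / ((Np:ℝ) - Ng))]
          rw [← Finset.sum_div, ← Finset.mul_sum, hQlast]
          field_simp
    -- lower bound for every permutation
    have hperm : ∀ π : Equiv.Perm n, m + ((Np - Ng : ℕ):ℝ) * c0 ≤ ∑ a, D a (π a) := by
      intro π
      have h1 : ∑ a, D a (π a) = ∑ b, D (π⁻¹ b) b := by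
        rw [← Equiv.sum_comp π (fun b => D (π⁻¹ b) b)]
        exact Finset.sum_congr rfl fun a _ => by simp
      rw [h1, Fintype.sum_sum_type]
      simp only [hD, Sum.elim_inl, Sum.elim_inr, hbg]
      rw [Finset.sum_const, Finset.card_univ, Fintype.card_fin, nsmul_eq_mul]
      have hτ : Function.Injective (fun j : Fin Ng => e (π⁻¹ (Sum.inl j))) :=
        fun x y hxy => Sum.inl_injective (π⁻¹.injective (e.injective hxy))
      have hb := hσopt _ hτ
      linarith
    have hlb := birkhoff_lb M D hMds _ hperm
    -- identify the doubly stochastic cost with Np times the OT cost of Q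
    have hMD : ∑ a, ∑ b, M a b * D a b = (Np:ℝ) * ∑ i, ∑ j, Q i j * C i j := by
      rw [Finset.mul_sum, ← Equiv.sum_comp e (fun i => (Np:ℝ) * ∑ j, Q i j * C i j)]
      refine Finset.sum_congr rfl fun a _ => ?_
      rw [Fintype.sum_sum_type]
      simp only [hM, hD, Sum.elim_inl, Sum.elim_inr]
      rw [Finset.sum_const, Finset.card_univ, Fintype.card_fin, nsmul_eq_mul]
      have h2 : ((Np - Ng : ℕ):ℝ) * ((Np:ℝ) * Q (e a) (Fin.last Ng) / ((Np:ℝ) - Ng) * C (e a) (Fin.last Ng))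
          = (Np:ℝ) * Q (e a) (Fin.last Ng) * C (e a) (Fin.last Ng) := by
        rw [← mul_assoc, hkey (e a)]
      rw [h2, Fin.sum_univ_castSucc (f := fun j => Q (e a) j * C (e a) j), mul_add,
        Finset.mul_sum]
      congr 1
      · exact Finset.sum_congr rfl fun j _ => by ring
      · ring
    rw [hMD, hdcast] at hlb
    rw [hcostP]
    have hfin : (1/(Np:ℝ)) * (m + ((Np:ℝ) - Ng) * c0)
        ≤ (1/(Np:ℝ)) * ((Np:ℝ) * ∑ i, ∑ j, Q i j * C i j) :=
      mul_le_mul_of_nonneg_left hlb (by positivity)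
    calc (1/(Np:ℝ)) * (m + ((Np:ℝ) - Ng) * c0) ≤ _ := hfin
      _ = ∑ i, ∑ j, Q i j * C i j := by
        field_simp
  · -- values
    intro i j
    simp only [hPdef]
    split
    · split
      · right; rfl
      · left; rfl
    · split
      · left; rfl
      · right; rfl
  · -- assignment iff
    intro j i
    rw [hPc]
    by_cases h : σ j = i
    · simp [h]
    · simp only [if_neg h]
      constructor
      · intro h0; exact absurd h0.symm hnpne
      · intro h1; exact absurd h1.symm h
end

section
/- The minimum of the optimal transport cost over the transport polytope U(α,β) (with the augmented cost matrix including a constant-cost background column) equals (1/N_p) times the minimum bipartite matching cost plus (N_p - N_g)·c_∅/N_p. -/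
open Finset

lemma OTaux_sum_restrict {Np Ng : ℕ} (h : Ng ≤ Np) (g : Fin Np → ℝ)
    (hg : ∀ k : Fin Np, Ng ≤ (k : ℕ) → g k = 0) :
    ∑ k, g k = ∑ j : Fin Ng, g (Fin.castLE h j) := by
  have h1 : ∑ j : Fin Ng, g (Fin.castLE h j)
      = ∑ k ∈ Finset.univ.map (Fin.castLEEmb h), g k := by
    rw [Finset.sum_map]; rfl
  rw [h1]
  refine (Finset.sum_subset (Finset.subset_univ _) (fun k _ hk => hg k ?_)).symm
  by_contra hlt
  push_neg at hlt
  exact hk (Finset.mem_map.mpr ⟨⟨k, hlt⟩, Finset.mem_univ _, Fin.ext rfl⟩)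

lemma OTaux_filter_lt_card {Np Ng : ℕ} (h : Ng ≤ Np) :
    (Finset.univ.filter (fun k : Fin Np => (k : ℕ) < Ng)).card = Ng := by
  have : Finset.univ.filter (fun k : Fin Np => (k : ℕ) < Ng)
      = Finset.univ.map (Fin.castLEEmb h) := by
    ext k
    simp only [Finset.mem_filter, Finset.mem_univ, true_and, Finset.mem_map]
    constructor
    · intro hk; exact ⟨⟨k, hk⟩, Fin.ext rfl⟩
    · rintro ⟨j, rfl⟩; simpa using j.isLt
  rw [this, Finset.card_map, Finset.card_univ, Fintype.card_fin]

lemma OTaux_filter_not_lt_card {Np Ng : ℕ} (h : Ng ≤ Np) :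
    (Finset.univ.filter (fun k : Fin Np => ¬ (k : ℕ) < Ng)).card = Np - Ng := by
  have h2 := Finset.card_filter_add_card_filter_not
    (s := (Finset.univ : Finset (Fin Np))) (p := fun k : Fin Np => (k : ℕ) < Ng)
  rw [OTaux_filter_lt_card h, Finset.card_univ, Fintype.card_fin] at h2
  omega

/-- The minimum of the OT cost over the transport polytope `U(α,β)` (augmented with a
constant-cost background column) equals `(1/Np)` times the minimum bipartite matching cost
plus `(Np - Ng) * c∅ / Np`. -/
theorem OT_value_eq_bipartite_matching_value
    (Np Ng : ℕ) (hNp : 0 < Np) (hNg : Ng ≤ Np)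
    (C : Fin Np → Fin (Ng + 1) → ℝ) (c0 : ℝ)
    (hbg : ∀ i, C i (Fin.last Ng) = c0)
    (β : Fin (Ng + 1) → ℝ)
    (hβ : ∀ j : Fin Ng, β j.castSucc = 1 / Np)
    (hβbg : β (Fin.last Ng) = (Np - Ng : ℝ) / Np)
    (m : ℝ)
    (hm : IsLeast {s : ℝ | ∃ σ : Fin Ng → Fin Np, Function.Injective σ ∧
      s = ∑ j : Fin Ng, C (σ j) j.castSucc} m) :
    IsLeast {v : ℝ | ∃ P : Fin Np → Fin (Ng + 1) → ℝ,
        (∀ i j, 0 ≤ P i j) ∧ (∀ i, ∑ j, P i j = 1 / Np) ∧ (∀ j, ∑ i, P i j = β j) ∧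
        v = ∑ i, ∑ j, P i j * C i j}
      ((1 / Np) * m + (Np - Ng : ℝ) * c0 / Np) := by
  classical
  obtain ⟨⟨σ₀, hσinj, hσsum⟩, hmlb⟩ := hm
  have hNpR : (0:ℝ) < (Np:ℝ) := by exact_mod_cast hNp
  have hNpne : (Np:ℝ) ≠ 0 := ne_of_gt hNpR
  constructor
  · -- Membership: build P from the optimal matching σ₀
    set P : Fin Np → Fin (Ng + 1) → ℝ := fun i j =>
      if h : (j : ℕ) < Ng then (if σ₀ ⟨j, h⟩ = i then 1 / Np else 0)
      else (if ∃ j', σ₀ j' = i then 0 else 1 / Np) with hPdef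
    have hPcs : ∀ (i) (j : Fin Ng), P i j.castSucc = if σ₀ j = i then 1 / (Np:ℝ) else 0 := by
      intro i j
      simp only [hPdef, Fin.coe_castSucc, dif_pos j.isLt, Fin.eta]
    have hPlast : ∀ i, P i (Fin.last Ng) = if ∃ j', σ₀ j' = i then 0 else 1 / (Np:ℝ) := by
      intro i
      simp only [hPdef, Fin.val_last, lt_irrefl, dif_neg, not_false_iff]
    have hrange : ∀ i, (∑ j : Fin Ng, if σ₀ j = i then (1/(Np:ℝ)) else 0)
        = if ∃ j', σ₀ j' = i then 1/(Np:ℝ) else 0 := by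
      intro i
      by_cases h : ∃ j', σ₀ j' = i
      · obtain ⟨j₀, hj₀⟩ := h
        rw [if_pos ⟨j₀, hj₀⟩, Finset.sum_eq_single j₀]
        · rw [if_pos hj₀]
        · intro b _ hb
          exact if_neg (fun hb' => hb (hσinj (hb'.trans hj₀.symm)))
        · intro hb; exact absurd (Finset.mem_univ j₀) hb
      · rw [if_neg h, Finset.sum_eq_zero]
        intro j _
        exact if_neg (fun hj => h ⟨j, hj⟩)
    have hProw : ∀ i, ∑ j, P i j = 1 / (Np:ℝ) := by
      intro i
      rw [Fin.sum_univ_castSucc]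
      simp only [hPcs, hPlast, hrange]
      by_cases h : ∃ j', σ₀ j' = i <;> simp [h]
    have hPcol : ∀ j, ∑ i, P i j = β j := by
      intro j
      induction j using Fin.lastCases with
      | last =>
        simp only [hPlast, hβbg]
        have him : ∀ i : Fin Np, (if ∃ j', σ₀ j' = i then (0:ℝ) else 1/Np)
            = 1/Np - (if i ∈ Finset.univ.image σ₀ then 1/(Np:ℝ) else 0) := by
          intro i
          by_cases h : ∃ j', σ₀ j' = i
          · obtain ⟨j', hj'⟩ := h
            rw [if_pos ⟨j', hj'⟩, if_pos (Finset.mem_image.mpr ⟨j', Finset.mem_univ _, hj'⟩)]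
            ring
          · rw [if_neg h, if_neg (fun hmem => by
              obtain ⟨j', _, hj'⟩ := Finset.mem_image.mp hmem
              exact h ⟨j', hj'⟩)]
            ring
        rw [Finset.sum_congr rfl (fun i _ => him i), Finset.sum_sub_distrib,
          Finset.sum_const, Finset.sum_ite_mem, Finset.univ_inter, Finset.sum_const,
          Finset.card_image_of_injective _ hσinj]
        simp only [Finset.card_univ, Fintype.card_fin, nsmul_eq_mul]
        field_simp
      | cast j =>
        simp only [hPcs, hβ j]
        rw [Finset.sum_ite_eq]
        simp
    refine ⟨P, ?_, hProw, hPcol, ?_⟩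
    · intro i j
      simp only [hPdef]
      split_ifs <;> positivity
    · rw [hσsum]
      have hrow : ∀ i, ∑ j, P i j * C i j
          = ∑ j : Fin Ng, P i j.castSucc * C i j.castSucc + P i (Fin.last Ng) * c0 := by
        intro i
        rw [Fin.sum_univ_castSucc, hbg i]
      rw [Finset.sum_congr rfl (fun i _ => hrow i), Finset.sum_add_distrib]
      have h1 : ∑ i, ∑ j : Fin Ng, P i j.castSucc * C i j.castSucc
          = (1/(Np:ℝ)) * ∑ j : Fin Ng, C (σ₀ j) j.castSucc := by
        rw [Finset.sum_comm, Finset.mul_sum]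
        refine Finset.sum_congr rfl (fun j _ => ?_)
        simp only [hPcs, ite_mul, zero_mul]
        rw [Finset.sum_ite_eq]
        simp
      have h2 : ∑ i, P i (Fin.last Ng) * c0 = ((Np:ℝ) - Ng) * c0 / Np := by
        rw [← Finset.sum_mul, hPcol (Fin.last Ng), hβbg]
        ring
      rw [h1, h2]
  · -- Lower bound
    rintro v ⟨P, hP0, hProw, hPcol, rfl⟩
    set Q : Fin Np → Fin Ng → ℝ := fun i j => Np * P i j.castSucc with hQdef
    have hQ0 : ∀ i j, 0 ≤ Q i j := fun i j => mul_nonneg hNpR.le (hP0 _ _)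
    have hQcol : ∀ j, ∑ i, Q i j = 1 := by
      intro j
      rw [hQdef, ← Finset.mul_sum, hPcol, hβ]
      field_simp
    have hProwsplit : ∀ i, ∑ j : Fin Ng, P i j.castSucc = 1/(Np:ℝ) - P i (Fin.last Ng) := by
      intro i
      have h := hProw i
      rw [Fin.sum_univ_castSucc] at h
      linarith
    have hQrow : ∀ i, ∑ j, Q i j = 1 - Np * P i (Fin.last Ng) := by
      intro i
      rw [hQdef, ← Finset.mul_sum, hProwsplit, mul_sub, mul_one_div, div_self hNpne]
    have hQrowle : ∀ i, ∑ j, Q i j ≤ 1 := by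
      intro i
      have h0 : 0 ≤ (Np:ℝ) * P i (Fin.last Ng) := mul_nonneg hNpR.le (hP0 _ _)
      rw [hQrow]; linarith
    set r : Fin Np → ℝ := fun i => 1 - ∑ j, Q i j with hrdef
    have hr0 : ∀ i, 0 ≤ r i := fun i => by
      have := hQrowle i; simp only [hrdef]; linarith
    have hrsum : ∑ i, r i = (Np:ℝ) - Ng := by
      simp only [hrdef]
      rw [Finset.sum_sub_distrib, Finset.sum_const, Finset.card_univ, Fintype.card_fin,
        Finset.sum_comm, Finset.sum_congr rfl (fun j (_ : j ∈ Finset.univ) => hQcol j)]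
      simp
    have hNgNpR : (Ng:ℝ) ≤ (Np:ℝ) := Nat.cast_le.mpr hNg
    set M : Matrix (Fin Np) (Fin Np) ℝ := fun i k =>
      if h : (k:ℕ) < Ng then Q i ⟨k, h⟩ else r i / ((Np:ℝ) - Ng) with hMdef
    have hM0 : ∀ i k, 0 ≤ M i k := by
      intro i k
      simp only [hMdef]
      split_ifs
      · exact hQ0 _ _
      · exact div_nonneg (hr0 i) (by linarith)
    have hMrow : ∀ i, ∑ k, M i k = 1 := by
      intro i
      have hsplit : ∀ k : Fin Np, M i k = (if h : (k:ℕ) < Ng then Q i ⟨k,h⟩ else 0)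
          + (if (k:ℕ) < Ng then 0 else r i / ((Np:ℝ)-Ng)) := by
        intro k; by_cases h : (k:ℕ) < Ng <;> simp [hMdef, h]
      rw [Finset.sum_congr rfl (fun k _ => hsplit k), Finset.sum_add_distrib]
      have e1 : ∑ k : Fin Np, (if h : (k:ℕ) < Ng then Q i ⟨k,h⟩ else 0) = ∑ j, Q i j := by
        rw [OTaux_sum_restrict hNg _ (fun k hk => dif_neg (not_lt.mpr hk))]
        exact Finset.sum_congr rfl (fun j _ => dif_pos (by simpa using j.isLt))
      have e2 : ∑ k : Fin Np, (if (k:ℕ) < Ng then (0:ℝ) else r i / ((Np:ℝ)-Ng))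
          = ((Np - Ng : ℕ):ℝ) * (r i / ((Np:ℝ)-Ng)) := by
        rw [Finset.sum_ite, Finset.sum_const_zero, Finset.sum_const, zero_add,
          OTaux_filter_not_lt_card hNg, nsmul_eq_mul]
      rw [e1, e2, Nat.cast_sub hNg]
      rcases eq_or_lt_of_le hNgNpR with heq | hlt
      · have hz : ∑ i', r i' = 0 := by rw [hrsum, ← heq]; ring
        have hri : r i = 0 :=
          (Finset.sum_eq_zero_iff_of_nonneg (fun i' _ => hr0 i')).mp hz i (Finset.mem_univ i)
        have hQ1 : ∑ j, Q i j = 1 := by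
          have : r i = 1 - ∑ j, Q i j := rfl
          rw [this] at hri; linarith
        rw [hQ1, hri]
        ring
      · have hne : ((Np:ℝ) - Ng) ≠ 0 := sub_ne_zero.mpr (ne_of_gt hlt)
        rw [mul_comm, div_mul_cancel₀ _ hne]
        have : r i = 1 - ∑ j, Q i j := rfl
        rw [this]; ring
    have hMcol : ∀ k, ∑ i, M i k = 1 := by
      intro k
      by_cases h : (k:ℕ) < Ng
      · simp only [hMdef, dif_pos h]
        exact hQcol ⟨k, h⟩
      · have hlt : Ng < Np := lt_of_le_of_lt (not_lt.mp h) k.isLt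
        have hne : ((Np:ℝ) - Ng) ≠ 0 :=
          sub_ne_zero.mpr (ne_of_gt (by exact_mod_cast hlt))
        simp only [hMdef, dif_neg h]
        rw [← Finset.sum_div, hrsum, div_self hne]
    have hMds : M ∈ doublyStochastic ℝ (Fin Np) :=
      mem_doublyStochastic_iff_sum.mpr ⟨hM0, hMrow, hMcol⟩
    obtain ⟨w, hw0, hwsum, hwM⟩ := exists_eq_sum_perm_of_mem_doublyStochastic hMds
    set D : Fin Np → Fin Np → ℝ := fun i k =>
      if h : (k:ℕ) < Ng then C i ⟨(k:ℕ), Nat.lt_succ_of_lt h⟩ else 0 with hDdef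
    have hPm : ∀ (σ : Equiv.Perm (Fin Np)) i k,
        (σ.permMatrix ℝ) i k = if σ i = k then (1:ℝ) else 0 := by
      intro σ i k
      simp [Equiv.Perm.permMatrix, PEquiv.toMatrix_apply, Equiv.toPEquiv_apply,
        Option.mem_def, eq_comm]
    have hperm : ∀ σ : Equiv.Perm (Fin Np),
        m ≤ ∑ i, ∑ k, (σ.permMatrix ℝ) i k * D i k := by
      intro σ
      have e1 : ∑ i, ∑ k, (σ.permMatrix ℝ) i k * D i k = ∑ i, D i (σ i) := by
        refine Finset.sum_congr rfl fun i _ => ?_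
        simp only [hPm, ite_mul, one_mul, zero_mul]
        rw [Finset.sum_ite_eq]
        simp
      have e2 : ∑ i, D i (σ i) = ∑ k, D (σ⁻¹ k) k := by
        rw [← Equiv.sum_comp (σ⁻¹ : Equiv.Perm (Fin Np)) (fun i => D i (σ i))]
        exact Finset.sum_congr rfl fun k _ => by simp
      have e3 : ∑ k, D (σ⁻¹ k) k
          = ∑ j : Fin Ng, C (σ⁻¹ (Fin.castLE hNg j)) j.castSucc := by
        rw [OTaux_sum_restrict hNg _ (fun k hk => by simp [hDdef, dif_neg (not_lt.mpr hk)])]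
        refine Finset.sum_congr rfl fun j _ => ?_
        simp only [hDdef]
        rw [dif_pos (by simpa using j.isLt)]
        rfl
      rw [e1, e2, e3]
      refine hmlb ⟨fun j => σ⁻¹ (Fin.castLE hNg j), ?_, rfl⟩
      exact fun a b hab => Fin.castLE_injective hNg (σ⁻¹.injective hab)
    have hMapply : ∀ i k, M i k = ∑ σ : Equiv.Perm (Fin Np), w σ * (σ.permMatrix ℝ) i k := by
      intro i k
      rw [← hwM]
      simp only [Matrix.sum_apply, Matrix.smul_apply, smul_eq_mul]
    have hMD : m ≤ ∑ i, ∑ k, M i k * D i k := by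
      have key0 : ∀ i, ∑ k, M i k * D i k
          = ∑ σ : Equiv.Perm (Fin Np), w σ * ∑ k, (σ.permMatrix ℝ) i k * D i k := by
        intro i
        simp only [hMapply, Finset.sum_mul]
        rw [Finset.sum_comm]
        simp only [Finset.mul_sum, mul_assoc]
      have key : ∑ i, ∑ k, M i k * D i k
          = ∑ σ : Equiv.Perm (Fin Np), w σ * (∑ i, ∑ k, (σ.permMatrix ℝ) i k * D i k) := by
        calc ∑ i, ∑ k, M i k * D i k
            = ∑ i, ∑ σ : Equiv.Perm (Fin Np), w σ * ∑ k, (σ.permMatrix ℝ) i k * D i k :=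
              Finset.sum_congr rfl fun i _ => key0 i
          _ = ∑ σ : Equiv.Perm (Fin Np), ∑ i, w σ * ∑ k, (σ.permMatrix ℝ) i k * D i k :=
              Finset.sum_comm
          _ = _ := Finset.sum_congr rfl fun σ _ => (Finset.mul_sum _ _ _).symm
      rw [key]
      calc m = ∑ σ : Equiv.Perm (Fin Np), w σ * m := by
              rw [← Finset.sum_mul, hwsum, one_mul]
        _ ≤ _ := Finset.sum_le_sum fun σ _ =>
              mul_le_mul_of_nonneg_left (hperm σ) (hw0 σ)
    have hQD : ∑ i, ∑ k, M i k * D i k = ∑ i, ∑ j : Fin Ng, Q i j * C i j.castSucc := by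
      refine Finset.sum_congr rfl fun i _ => ?_
      rw [OTaux_sum_restrict hNg _
        (fun k hk => by simp [hMdef, hDdef, dif_neg (not_lt.mpr hk)])]
      refine Finset.sum_congr rfl fun j _ => ?_
      have hj : ((Fin.castLE hNg j : Fin Np) : ℕ) < Ng := by simpa using j.isLt
      simp only [hMdef, hDdef, dif_pos hj]
      rfl
    have hvP : ∑ i, ∑ j, P i j * C i j
        = (1/(Np:ℝ)) * (∑ i, ∑ k, M i k * D i k) + ((Np:ℝ)-Ng) * c0 / Np := by
      rw [hQD]
      have hrow : ∀ i, ∑ j, P i j * C i j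
          = ∑ j : Fin Ng, P i j.castSucc * C i j.castSucc + P i (Fin.last Ng) * c0 := by
        intro i
        rw [Fin.sum_univ_castSucc, hbg i]
      rw [Finset.sum_congr rfl (fun i _ => hrow i), Finset.sum_add_distrib]
      have h1 : ∑ i, ∑ j : Fin Ng, P i j.castSucc * C i j.castSucc
          = (1/(Np:ℝ)) * ∑ i, ∑ j : Fin Ng, Q i j * C i j.castSucc := by
        rw [Finset.mul_sum]
        refine Finset.sum_congr rfl fun i _ => ?_
        rw [Finset.mul_sum]
        refine Finset.sum_congr rfl fun j _ => ?_
        rw [hQdef]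
        field_simp
      have h2 : ∑ i, P i (Fin.last Ng) * c0 = ((Np:ℝ) - Ng) * c0 / Np := by
        rw [← Finset.sum_mul, hPcol (Fin.last Ng), hβbg]
        ring
      rw [h1, h2]
    rw [hvP]
    have hstep := mul_le_mul_of_nonneg_left hMD (le_of_lt (by positivity : (0:ℝ) < 1/(Np:ℝ)))
    linarith
end

section
/- The transport polytope U(α,β) with α uniform 1/N_p on N_p predictions and β = (1/N_p,…,1/N_p,(N_p-N_g)/N_p) is a nonempty compact convex polytope, and its extreme points are exactly the matrices with entries in {0, 1/N_p} whose restrictions to the first N_g columns correspond to injections from ground truths to predictions. -/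
open Finset

namespace TransportAux

variable (Np Ng : ℕ)

def g (k : Fin Np) : Fin (Ng + 1) :=
  if h : (k : ℕ) < Ng then ⟨k, by omega⟩ else Fin.last Ng

lemma g_castSucc (hNg : Ng ≤ Np) (j : Fin Ng) (k : Fin Np) :
    g Np Ng k = j.castSucc ↔ k = ⟨j, lt_of_lt_of_le j.2 hNg⟩ := by
  unfold g
  split <;> (simp [Fin.ext_iff] <;> omega)

lemma g_last (k : Fin Np) : g Np Ng k = Fin.last Ng ↔ Ng ≤ (k : ℕ) := by
  unfold g
  split <;> (simp [Fin.ext_iff] <;> omega)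

noncomputable def L : Matrix (Fin Np) (Fin Np) ℝ →ₗ[ℝ] (Fin Np → Fin (Ng + 1) → ℝ) where
  toFun M := fun i j => (∑ k ∈ univ.filter (fun k => g Np Ng k = j), M i k) / Np
  map_add' M N := by
    funext i j
    simp [Finset.sum_add_distrib, add_div]
  map_smul' c M := by
    funext i j
    simp only [Matrix.smul_apply, smul_eq_mul, RingHom.id_apply, Pi.smul_apply]
    rw [← Finset.mul_sum, mul_div_assoc]

lemma sum_ite_le (hNg : Ng ≤ Np) (c : ℝ) :
    ∑ k : Fin Np, (if Ng ≤ (k : ℕ) then c else 0) = (Np - Ng : ℕ) * c := by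
  rw [Fin.sum_univ_eq_sum_range (fun k => if Ng ≤ k then c else 0) Np, Finset.range_eq_Ico,
    ← Finset.sum_Ico_consecutive _ (Nat.zero_le Ng) hNg]
  rw [Finset.sum_congr rfl (fun k hk => if_neg (by simp at hk; omega)),
    Finset.sum_congr (M := ℝ) rfl (fun k hk => if_pos (by simp at hk; omega))]
  simp [Nat.card_Ico]

variable {Np Ng}

lemma L_entry_nonneg {M : Matrix (Fin Np) (Fin Np) ℝ} (hM0 : ∀ i k, 0 ≤ M i k)
    (i : Fin Np) (j : Fin (Ng + 1)) : 0 ≤ L Np Ng M i j :=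
  div_nonneg (Finset.sum_nonneg fun k _ => hM0 i k) (Nat.cast_nonneg _)

lemma L_row_sum {M : Matrix (Fin Np) (Fin Np) ℝ} (hMr : ∀ i, ∑ k, M i k = 1) (i : Fin Np) :
    ∑ j, L Np Ng M i j = 1 / Np := by
  simp only [L, LinearMap.coe_mk, AddHom.coe_mk]
  rw [← Finset.sum_div, Finset.sum_fiberwise univ (g Np Ng) (M i), hMr]

lemma filter_castSucc (hNg : Ng ≤ Np) (j : Fin Ng) :
    univ.filter (fun k => g Np Ng k = j.castSucc) = {(⟨j, lt_of_lt_of_le j.2 hNg⟩ : Fin Np)} := by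
  ext k
  simp [g_castSucc Np Ng hNg]

lemma L_col_castSucc (hNg : Ng ≤ Np) (M : Matrix (Fin Np) (Fin Np) ℝ) (j : Fin Ng) (i : Fin Np) :
    L Np Ng M i j.castSucc = M i ⟨j, lt_of_lt_of_le j.2 hNg⟩ / Np := by
  simp only [L, LinearMap.coe_mk, AddHom.coe_mk]
  rw [filter_castSucc hNg, Finset.sum_singleton]

lemma L_col_last (M : Matrix (Fin Np) (Fin Np) ℝ) (i : Fin Np) :
    L Np Ng M i (Fin.last Ng) = (∑ k ∈ univ.filter (fun k : Fin Np => Ng ≤ (k : ℕ)), M i k) / Np := by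
  simp only [L, LinearMap.coe_mk, AddHom.coe_mk]
  congr 1
  apply Finset.sum_congr _ (fun _ _ => rfl)
  ext k
  simp [g_last]

lemma L_col_sum_castSucc (hNg : Ng ≤ Np) {M : Matrix (Fin Np) (Fin Np) ℝ} (hMc : ∀ k, ∑ i, M i k = 1)
    (j : Fin Ng) : ∑ i, L Np Ng M i j.castSucc = 1 / Np := by
  simp only [L_col_castSucc hNg]
  rw [← Finset.sum_div, hMc]

lemma L_col_sum_last (hNg : Ng ≤ Np) {M : Matrix (Fin Np) (Fin Np) ℝ} (hMc : ∀ k, ∑ i, M i k = 1) :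
    ∑ i, L Np Ng M i (Fin.last Ng) = ((Np : ℝ) - Ng) / Np := by
  simp only [L_col_last]
  rw [← Finset.sum_div, show (∑ i, ∑ k ∈ univ.filter (fun k : Fin Np => Ng ≤ (k : ℕ)), M i k)
      = ∑ k ∈ univ.filter (fun k : Fin Np => Ng ≤ (k : ℕ)), ∑ i, M i k from Finset.sum_comm]
  have : ∀ k ∈ univ.filter (fun k : Fin Np => Ng ≤ (k : ℕ)), ∑ i, M i k = 1 :=
    fun k _ => hMc k
  rw [Finset.sum_congr rfl this]
  have hsf : (∑ _x ∈ filter (fun k : Fin Np => Ng ≤ (k : ℕ)) univ, (1 : ℝ))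
      = ∑ k : Fin Np, (if Ng ≤ (k : ℕ) then (1 : ℝ) else 0) := by
    rw [Finset.sum_filter]
  rw [hsf, sum_ite_le Np Ng hNg, Nat.cast_sub hNg, mul_one]


noncomputable def Mof (Np Ng : ℕ) (P : Fin Np → Fin (Ng + 1) → ℝ) :
    Matrix (Fin Np) (Fin Np) ℝ :=
  Matrix.of fun i k => Np * P i (g Np Ng k) * (if (k : ℕ) < Ng then 1 else ((Np : ℝ) - Ng)⁻¹)

section Surj

variable {P : Fin Np → Fin (Ng + 1) → ℝ}

lemma last_zero (hNp : 0 < Np) (hP0 : ∀ i j, 0 ≤ P i j)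
    (hlast : ∑ i, P i (Fin.last Ng) = ((Np : ℝ) - Ng) / Np)
    (hz : (Np : ℝ) - Ng = 0) (i : Fin Np) : P i (Fin.last Ng) = 0 := by
  have h0 : ∑ i, P i (Fin.last Ng) = 0 := by rw [hlast, hz, zero_div]
  exact (Finset.sum_eq_zero_iff_of_nonneg (fun i _ => hP0 i _)).1 h0 i (mem_univ i)

lemma Mof_key (hNp : 0 < Np) (hNg : Ng ≤ Np) (hP0 : ∀ i j, 0 ≤ P i j)
    (hlast : ∑ i, P i (Fin.last Ng) = ((Np : ℝ) - Ng) / Np)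
    (i : Fin Np) (j : Fin (Ng + 1)) :
    ∑ k ∈ univ.filter (fun k => g Np Ng k = j), Mof Np Ng P i k = Np * P i j := by
  induction j using Fin.lastCases with
  | last =>
      have h1 : ∀ k ∈ univ.filter (fun k : Fin Np => g Np Ng k = Fin.last Ng),
          Mof Np Ng P i k = Np * P i (Fin.last Ng) * ((Np : ℝ) - Ng)⁻¹ := by
        intro k hk
        rw [mem_filter] at hk
        have hle : Ng ≤ (k : ℕ) := (g_last Np Ng k).1 hk.2
        simp only [Mof, Matrix.of_apply, hk.2, if_neg (not_lt.2 hle)]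
      rw [Finset.sum_congr rfl h1]
      have hsf : (∑ _k ∈ univ.filter (fun k : Fin Np => g Np Ng k = Fin.last Ng),
          (Np * P i (Fin.last Ng) * ((Np : ℝ) - Ng)⁻¹))
          = ∑ k : Fin Np, (if Ng ≤ (k : ℕ) then Np * P i (Fin.last Ng) * ((Np : ℝ) - Ng)⁻¹
              else 0) := by
        rw [Finset.sum_filter]
        exact Finset.sum_congr rfl (fun k _ => by simp [g_last])
      rw [hsf, sum_ite_le Np Ng hNg, Nat.cast_sub hNg]
      by_cases hz : (Np : ℝ) - Ng = 0
      · rw [hz, last_zero hNp hP0 hlast hz i]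
        ring
      · field_simp
  | cast j =>
      rw [filter_castSucc hNg, Finset.sum_singleton]
      have hg : g Np Ng (⟨j, lt_of_lt_of_le j.2 hNg⟩ : Fin Np) = j.castSucc :=
        (g_castSucc Np Ng hNg j _).2 rfl
      simp only [Mof, Matrix.of_apply, hg, if_pos j.2, mul_one]

lemma Mof_mem (hNp : 0 < Np) (hNg : Ng ≤ Np) (hP0 : ∀ i j, 0 ≤ P i j)
    (hProw : ∀ i, ∑ j, P i j = 1 / Np)
    (hPcolc : ∀ j : Fin Ng, ∑ i, P i j.castSucc = 1 / Np)
    (hlast : ∑ i, P i (Fin.last Ng) = ((Np : ℝ) - Ng) / Np) :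
    Mof Np Ng P ∈ doublyStochastic ℝ (Fin Np) := by
  have hNp' : (Np : ℝ) ≠ 0 := Nat.cast_ne_zero.2 hNp.ne'
  rw [mem_doublyStochastic_iff_sum]
  refine ⟨fun i k => ?_, fun i => ?_, fun k => ?_⟩
  · refine mul_nonneg (mul_nonneg (by positivity) (hP0 _ _)) ?_
    split
    · exact zero_le_one
    · exact inv_nonneg.2 (by simp [sub_nonneg, Nat.cast_le, hNg])
  · rw [← Finset.sum_fiberwise univ (g Np Ng) (Mof Np Ng P i)]
    have : ∀ j ∈ (univ : Finset (Fin (Ng + 1))),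
        ∑ k ∈ univ.filter (fun k => g Np Ng k = j), Mof Np Ng P i k = Np * P i j :=
      fun j _ => Mof_key hNp hNg hP0 hlast i j
    rw [Finset.sum_congr rfl this, ← Finset.mul_sum, hProw, mul_one_div, div_self hNp']
  · by_cases hk : (k : ℕ) < Ng
    · have hg : g Np Ng k = (⟨(k : ℕ), hk⟩ : Fin Ng).castSucc := by
        rw [g_castSucc Np Ng hNg]
      simp only [Mof, Matrix.of_apply, hg, if_pos hk, mul_one]
      rw [← Finset.mul_sum, hPcolc, mul_one_div, div_self hNp']
    · have hlt : Ng < Np := lt_of_le_of_lt (not_lt.1 hk) k.2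
      have hz : (Np : ℝ) - Ng ≠ 0 := by
        have : (Ng : ℝ) < Np := by exact_mod_cast hlt
        linarith
      have hg : g Np Ng k = Fin.last Ng := (g_last Np Ng k).2 (not_lt.1 hk)
      simp only [Mof, Matrix.of_apply, hg, if_neg hk]
      rw [← Finset.sum_mul, ← Finset.mul_sum, hlast]
      field_simp

lemma L_Mof (hNp : 0 < Np) (hNg : Ng ≤ Np) (hP0 : ∀ i j, 0 ≤ P i j)
    (hlast : ∑ i, P i (Fin.last Ng) = ((Np : ℝ) - Ng) / Np) :
    L Np Ng (Mof Np Ng P) = P := by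
  have hNp' : (Np : ℝ) ≠ 0 := Nat.cast_ne_zero.2 hNp.ne'
  funext i j
  show (∑ k ∈ univ.filter (fun k => g Np Ng k = j), Mof Np Ng P i k) / Np = P i j
  rw [Mof_key hNp hNg hP0 hlast i j, mul_comm, mul_div_assoc, div_self hNp', mul_one]

end Surj

lemma L_perm (σ : Equiv.Perm (Fin Np)) (i : Fin Np) (j : Fin (Ng + 1)) :
    L Np Ng (σ.permMatrix ℝ) i j = (if g Np Ng (σ i) = j then 1 else 0) / Np := by
  show (∑ k ∈ univ.filter (fun k => g Np Ng k = j), σ.permMatrix ℝ i k) / Np = _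
  congr 1
  simp only [Equiv.Perm.permMatrix, PEquiv.toMatrix_apply, Equiv.toPEquiv_apply,
    Option.mem_some_iff]
  rw [Finset.sum_ite_eq (univ.filter (fun k => g Np Ng k = j)) (σ i) (fun _ => (1 : ℝ))]
  simp [mem_filter]

end TransportAux

open TransportAux in

/-- The augmented transport polytope `U(α,β)` (uniform `α = 1/Np`, `β j = 1/Np` for
`j ≤ Ng`, `β (Ng+1) = (Np-Ng)/Np`) is a nonempty compact convex polytope, and its extreme
points are exactly the matrices with entries in `{0, 1/Np}` whose restriction to the first
`Ng` columns corresponds to an injection from ground truths to predictions. -/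
theorem transport_polytope_extremePoints
    (Np Ng : ℕ) (hNp : 0 < Np) (hNg : Ng ≤ Np)
    (β : Fin (Ng + 1) → ℝ)
    (hβ : ∀ j : Fin Ng, β j.castSucc = 1 / Np)
    (hβbg : β (Fin.last Ng) = (Np - Ng : ℝ) / Np)
    (U : Set (Fin Np → Fin (Ng + 1) → ℝ))
    (hU : U = {P : Fin Np → Fin (Ng + 1) → ℝ | (∀ i j, 0 ≤ P i j) ∧
      (∀ i, ∑ j, P i j = 1 / Np) ∧ (∀ j, ∑ i, P i j = β j)}) :
    U.Nonempty ∧ IsCompact U ∧ Convex ℝ U ∧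
      U.extremePoints ℝ =
        {P | P ∈ U ∧ (∀ i j, P i j = 0 ∨ P i j = 1 / Np) ∧
          ∃ σ : Fin Ng → Fin Np, Function.Injective σ ∧
            ∀ j : Fin Ng, ∀ i, P i j.castSucc ≠ 0 ↔ i = σ j} := by
  have hNp' : (Np : ℝ) ≠ 0 := Nat.cast_ne_zero.2 hNp.ne'
  have hmemU : ∀ M ∈ doublyStochastic ℝ (Fin Np), L Np Ng M ∈ U := by
    intro M hM
    rw [mem_doublyStochastic_iff_sum] at hM
    rw [hU]
    refine ⟨fun i j => L_entry_nonneg hM.1 i j, fun i => L_row_sum hM.2.1 i, fun j => ?_⟩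
    induction j using Fin.lastCases with
    | last => rw [L_col_sum_last hNg hM.2.2, hβbg]
    | cast j => rw [L_col_sum_castSucc hNg hM.2.2 j, hβ j]
  have hsub : U ⊆ L Np Ng '' (doublyStochastic ℝ (Fin Np)) := by
    intro P hP
    rw [hU] at hP
    obtain ⟨hP0, hProw, hPcol⟩ := hP
    have hlast : ∑ i, P i (Fin.last Ng) = ((Np : ℝ) - Ng) / Np := by
      rw [hPcol, hβbg]
    have hPcolc : ∀ j : Fin Ng, ∑ i, P i j.castSucc = 1 / Np := fun j => by rw [hPcol, hβ]
    exact ⟨Mof Np Ng P, Mof_mem hNp hNg hP0 hProw hPcolc hlast, L_Mof hNp hNg hP0 hlast⟩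
  have hUeq : U = L Np Ng '' (doublyStochastic ℝ (Fin Np)) :=
    hsub.antisymm (by rintro _ ⟨M, hM, rfl⟩; exact hmemU M hM)
  have hUhull : U = convexHull ℝ
      (L Np Ng '' {σ.permMatrix ℝ | σ : Equiv.Perm (Fin Np)}) := by
    rw [hUeq, doublyStochastic_eq_convexHull_permMatrix, (L Np Ng).image_convexHull]
  have hfin : (L Np Ng '' {σ.permMatrix ℝ | σ : Equiv.Perm (Fin Np)}).Finite :=
    (Set.finite_range (fun σ : Equiv.Perm (Fin Np) => σ.permMatrix ℝ)).image _
  refine ⟨⟨L Np Ng 1, hmemU 1 (one_mem _)⟩, by rw [hUhull]; exact hfin.isCompact_convexHull (𝕜 := ℝ),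
    by rw [hUhull]; exact convex_convexHull ℝ _, ?_⟩
  apply Set.Subset.antisymm
  · -- extreme points are as described
    intro P hP
    have hPim : P ∈ L Np Ng '' {σ.permMatrix ℝ | σ : Equiv.Perm (Fin Np)} := by
      rw [hUhull] at hP
      exact extremePoints_convexHull_subset hP
    obtain ⟨_, ⟨σ, rfl⟩, rfl⟩ := hPim
    refine ⟨hmemU _ permMatrix_mem_doublyStochastic, fun i j => ?_,
      fun j => σ.symm ⟨j, lt_of_lt_of_le j.2 hNg⟩, fun j j' h => ?_, fun j i => ?_⟩
    · rw [L_perm]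
      split_ifs <;> simp
    · have := σ.symm.injective h
      exact Fin.ext (by simpa [Fin.ext_iff] using this)
    · rw [L_perm]
      by_cases h : σ i = (⟨j, lt_of_lt_of_le j.2 hNg⟩ : Fin Np)
      · rw [if_pos ((g_castSucc Np Ng hNg j (σ i)).2 h)]
        simp [hNp', Equiv.eq_symm_apply, h]
      · rw [if_neg (fun hc => h ((g_castSucc Np Ng hNg j (σ i)).1 hc))]
        simp [Equiv.eq_symm_apply, h]
  · -- described matrices are extreme
    intro P hP
    obtain ⟨hPU, h01, -⟩ := hP
    rw [mem_extremePoints]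
    refine ⟨hPU, ?_⟩
    intro x₁ h₁ x₂ h₂ hseg
    obtain ⟨a, b, ha, hb, hab, hsum⟩ := hseg
    rw [hU] at h₁ h₂ hPU
    have hx0 : ∀ i j, P i j = 0 → x₁ i j = 0 ∧ x₂ i j = 0 := by
      intro i j h0
      have he : a * x₁ i j + b * x₂ i j = 0 := by
        have := congrFun (congrFun hsum i) j
        simpa [h0] using this
      constructor <;>
        nlinarith [h₁.1 i j, h₂.1 i j, mul_nonneg ha.le (h₁.1 i j),
          mul_nonneg hb.le (h₂.1 i j)]
    have hone : ∀ x : Fin Np → Fin (Ng + 1) → ℝ, (∀ i, ∑ j, x i j = 1 / Np) →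
        (∀ i j, P i j = 0 → x i j = 0) → x = P := by
      intro x hxrow Hz
      funext i j
      obtain ⟨j₀, hj₀⟩ : ∃ j₀, P i j₀ ≠ 0 := by
        by_contra hc
        push_neg at hc
        have hz : ∑ j, P i j = 0 := Finset.sum_eq_zero (fun j _ => hc j)
        rw [hPU.2.1 i] at hz
        exact (one_div_ne_zero hNp') hz
      have hPj₀ : P i j₀ = 1 / Np := (h01 i j₀).resolve_left hj₀
      have huniq : ∀ j, j ≠ j₀ → P i j = 0 := by
        intro j hne
        by_contra hc
        have hPj : P i j = 1 / Np := (h01 i j).resolve_left hc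
        have hle : P i j₀ + P i j ≤ ∑ j', P i j' := by
          rw [← Finset.sum_pair (Ne.symm hne)]
          exact Finset.sum_le_sum_of_subset_of_nonneg (Finset.subset_univ _)
            (fun j' _ _ => hPU.1 i j')
        rw [hPU.2.1 i, hPj₀, hPj] at hle
        have hpos : 0 < 1 / (Np : ℝ) := by positivity
        linarith
      by_cases hj : j = j₀
      · subst hj
        have hxrow' := hxrow i
        rw [Finset.sum_eq_single_of_mem j (mem_univ j)
          (fun j' _ hne => Hz i j' (huniq j' hne))] at hxrow'
        rw [hxrow', hPj₀]
      · rw [Hz i j (huniq j hj), huniq j hj]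
    exact ⟨hone x₁ h₁.2.1 (fun i j h0 => (hx0 i j h0).1),
      hone x₂ h₂.2.1 (fun i j h0 => (hx0 i j h0).2)⟩
end

section
/- As ε → 0⁺, the value of the entropic-regularized OT problem converges to the value of the unregularized OT problem: min_{P ∈ U(α,β)} [⟨P,C⟩ − εH(P)] → min_{P ∈ U(α,β)} ⟨P,C⟩. -/
open Finset Real Filter Topology

lemma entropic_term_bounds {x : ℝ} (h0 : 0 ≤ x) (h1 : x ≤ 1) :
    -1 ≤ x * (Real.log x - 1) ∧ x * (Real.log x - 1) ≤ 0 := by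
  rcases eq_or_lt_of_le h0 with h | h
  · simp [← h]
  constructor
  · have hlog : 1 - x⁻¹ ≤ Real.log x := by
      have := Real.log_le_sub_one_of_pos (x := x⁻¹) (by positivity)
      rw [Real.log_inv] at this
      linarith
    have h2 : x * (1 - x⁻¹) ≤ x * Real.log x :=
      mul_le_mul_of_nonneg_left hlog h0
    have hx : x * (1 - x⁻¹) = x - 1 := by field_simp
    nlinarith
  · have hlog : Real.log x ≤ 0 := Real.log_nonpos h0 h1
    nlinarith

/-- As `ε → 0⁺`, the value of the entropic-regularized OT problem converges to the value of
the unregularized OT problem. -/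
theorem entropic_OT_value_tendsto_OT_value
    (N M : ℕ) (α : Fin N → ℝ) (β : Fin M → ℝ)
    (hα : ∀ i, 0 ≤ α i) (hβ : ∀ j, 0 ≤ β j)
    (hα1 : ∑ i, α i = 1) (hβ1 : ∑ j, β j = 1)
    (C : Fin N → Fin M → ℝ)
    (U : Set (Fin N → Fin M → ℝ))
    (hU : U = {P : Fin N → Fin M → ℝ | (∀ i j, 0 ≤ P i j) ∧
      (∀ i, ∑ j, P i j = α i) ∧ (∀ j, ∑ i, P i j = β j)})
    (H : (Fin N → Fin M → ℝ) → ℝ)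
    (hH : H = fun P => -(∑ i, ∑ j, P i j * (Real.log (P i j) - 1))) :
    Tendsto
      (fun ε : ℝ => sInf {v : ℝ | ∃ P ∈ U,
        v = (∑ i, ∑ j, P i j * C i j) - ε * H P})
      (𝓝[>] 0)
      (𝓝 (sInf {v : ℝ | ∃ P ∈ U, v = ∑ i, ∑ j, P i j * C i j})) := by
  subst hU hH
  set f : (Fin N → Fin M → ℝ) → ℝ := fun P => ∑ i, ∑ j, P i j * C i j with hf
  set U : Set (Fin N → Fin M → ℝ) := {P : Fin N → Fin M → ℝ | (∀ i j, 0 ≤ P i j) ∧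
      (∀ i, ∑ j, P i j = α i) ∧ (∀ j, ∑ i, P i j = β j)} with hUdef
  set H : (Fin N → Fin M → ℝ) → ℝ :=
    fun P => -(∑ i, ∑ j, P i j * (Real.log (P i j) - 1)) with hHdef
  set B : ℝ := (N : ℝ) * M with hB
  set K : ℝ := ∑ i, ∑ j, |C i j| with hK
  -- the product coupling
  have hP0 : (fun i j => α i * β j) ∈ U := by
    refine ⟨fun i j => mul_nonneg (hα i) (hβ j), fun i => ?_, fun j => ?_⟩
    · rw [← Finset.mul_sum, hβ1, mul_one]
    · rw [← Finset.sum_mul, hα1, one_mul]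
  -- entries of P ∈ U lie in [0,1]
  have hP01 : ∀ P ∈ U, ∀ i j, 0 ≤ P i j ∧ P i j ≤ 1 := by
    rintro P ⟨h0, h1, h2⟩ i j
    refine ⟨h0 i j, ?_⟩
    have h3 : P i j ≤ α i := by
      rw [← h1 i]
      exact Finset.single_le_sum (fun j _ => h0 i j) (Finset.mem_univ j)
    have h4 : α i ≤ 1 := by
      rw [← hα1]
      exact Finset.single_le_sum (fun i _ => hα i) (Finset.mem_univ i)
    linarith
  -- entropy bound
  have hHb : ∀ P ∈ U, 0 ≤ H P ∧ H P ≤ B := by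
    intro P hP
    have hterm : ∀ i j, -1 ≤ P i j * (Real.log (P i j) - 1) ∧
        P i j * (Real.log (P i j) - 1) ≤ 0 := fun i j =>
      entropic_term_bounds (hP01 P hP i j).1 (hP01 P hP i j).2
    have hlo : -((N : ℝ) * M) ≤ ∑ i, ∑ j, P i j * (Real.log (P i j) - 1) := by
      calc -((N : ℝ) * M) = ∑ _i : Fin N, ∑ _j : Fin M, (-1 : ℝ) := by
            simp [Finset.sum_const, mul_comm]
        _ ≤ _ := Finset.sum_le_sum (fun i _ => Finset.sum_le_sum
            (fun j _ => (hterm i j).1))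
    have hhi : ∑ i, ∑ j, P i j * (Real.log (P i j) - 1) ≤ 0 :=
      Finset.sum_nonpos fun i _ => Finset.sum_nonpos fun j _ => (hterm i j).2
    constructor
    · simp only [hHdef]; linarith
    · simp only [hHdef, hB]; linarith
  -- cost bound
  have hfb : ∀ P ∈ U, -K ≤ f P := by
    intro P hP
    have : ∀ i j, -|C i j| ≤ P i j * C i j := by
      intro i j
      obtain ⟨h0, h1⟩ := hP01 P hP i j
      rcases le_or_gt 0 (C i j) with hc | hc
      · have := mul_nonneg h0 hc
        have habs : |C i j| = C i j := abs_of_nonneg hc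
        linarith
      · have habs : |C i j| = -C i j := abs_of_neg hc
        nlinarith
    calc -K = ∑ i, ∑ j, -|C i j| := by simp [hK]
      _ ≤ f P := Finset.sum_le_sum fun i _ => Finset.sum_le_sum fun j _ => this i j
  set L : ℝ := sInf {v : ℝ | ∃ P ∈ U, v = f P} with hL
  set g : ℝ → ℝ := fun ε => sInf {v : ℝ | ∃ P ∈ U, v = f P - ε * H P} with hg
  have hSne : {v : ℝ | ∃ P ∈ U, v = f P}.Nonempty := ⟨_, _, hP0, rfl⟩
  have hSbdd : BddBelow {v : ℝ | ∃ P ∈ U, v = f P} := by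
    refine ⟨-K, ?_⟩; rintro v ⟨P, hP, rfl⟩; exact hfb P hP
  -- main estimate
  have hkey : ∀ ε : ℝ, 0 < ε → |g ε - L| ≤ ε * B := by
    intro ε hε
    have hSεne : {v : ℝ | ∃ P ∈ U, v = f P - ε * H P}.Nonempty := ⟨_, _, hP0, rfl⟩
    have hSεbdd : BddBelow {v : ℝ | ∃ P ∈ U, v = f P - ε * H P} := by
      refine ⟨-K - ε * B, ?_⟩
      rintro v ⟨P, hP, rfl⟩
      have h1 := hfb P hP
      have h2 := (hHb P hP).2
      have h3 : ε * H P ≤ ε * B := mul_le_mul_of_nonneg_left h2 hε.le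
      linarith
    have hle1 : L - ε * B ≤ g ε := by
      apply le_csInf hSεne
      rintro v ⟨P, hP, rfl⟩
      have h1 : L ≤ f P := csInf_le hSbdd ⟨P, hP, rfl⟩
      have h2 : ε * H P ≤ ε * B := mul_le_mul_of_nonneg_left (hHb P hP).2 hε.le
      linarith
    have hle2 : g ε ≤ L + ε * B := by
      have : g ε - ε * B ≤ L := by
        apply le_csInf hSne
        rintro v ⟨P, hP, rfl⟩
        have h1 : g ε ≤ f P - ε * H P := csInf_le hSεbdd ⟨P, hP, rfl⟩
        have h2 : 0 ≤ ε * H P := mul_nonneg hε.le (hHb P hP).1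
        have h3 : 0 ≤ ε * B := mul_nonneg hε.le (by positivity)
        linarith
      linarith
    rw [abs_le]
    constructor <;> linarith
  -- squeeze
  have hB0 : 0 ≤ B := by positivity
  rw [tendsto_iff_dist_tendsto_zero]
  have htend : Tendsto (fun ε : ℝ => ε * B) (𝓝[>] 0) (𝓝 0) := by
    have : Tendsto (fun ε : ℝ => ε * B) (𝓝 0) (𝓝 (0 * B)) :=
      (continuous_id.mul continuous_const).tendsto 0
    rw [zero_mul] at this
    exact this.mono_left nhdsWithin_le_nhds
  refine squeeze_zero' ?_ ?_ htend
  · exact Filter.Eventually.of_forall fun ε => dist_nonneg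
  · filter_upwards [self_mem_nhdsWithin] with ε hε
    rw [Real.dist_eq]
    exact hkey ε hε
end
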